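/- Let G be a connected graph, C a basis of small cycles of G with cycle-edge incidence matrix F_C (entries ±1 by orientation, 0 if edge not in cycle), and T a set of N_G - h_G edges of G, where N_G is the number of edges and h_G the first Betti number. Let F_C(T) be the square matrix obtained from F_C by deleting the columns labelled by T. Then det F_C(T) = ±1 if T is a spanning tree of G, and det F_C(T) = 0 otherwise. -/

import Mathlib

open scoped Classical

noncomputable section

/-- A finite multigraph with edges labelled by `Fin N`, each edge oriented
from its source `s e` to its target `t e`. -/
structure FinEdgeGraph (N : ℕ) where
  V : Type
  [fV : Fintype V]
  [dV : DecidableEq V]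
  s : Fin N → V
  t : Fin N → V

namespace FinEdgeGraph

variable {N : ℕ}

instance (G : FinEdgeGraph N) : Fintype G.V := G.fV
instance (G : FinEdgeGraph N) : DecidableEq G.V := G.dV

/-- The loop number (first Betti number) `h_G = N_G - |V| + 1` of a connected graph. -/
def loopNumber (G : FinEdgeGraph N) : ℕ := N + 1 - Fintype.card G.V

/-- Adjacency of two vertices through an edge of the edge set `S` (ignoring orientation). -/
def Adj (G : FinEdgeGraph N) (S : Finset (Fin N)) (u v : G.V) : Prop :=
  ∃ e ∈ S, (G.s e = u ∧ G.t e = v) ∨ (G.s e = v ∧ G.t e = u)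

/-- The subgraph with edge set `S` (and all vertices) is connected. -/
def ConnectedOn (G : FinEdgeGraph N) (S : Finset (Fin N)) : Prop :=
  ∀ u v : G.V, Relation.ReflTransGen (G.Adj S) u v

def IsConnected (G : FinEdgeGraph N) : Prop := G.ConnectedOn Finset.univ

/-- A spanning tree: a connected spanning subgraph with `|V| - 1` edges. -/
def IsSpanningTree (G : FinEdgeGraph N) (T : Finset (Fin N)) : Prop :=
  G.ConnectedOn T ∧ T.card + 1 = Fintype.card G.V

/-- The dual graph polynomial `φ_G = Σ_{spanning trees T} Π_{e ∈ T} α_e`. -/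
def dualPoly (G : FinEdgeGraph N) : MvPolynomial (Fin N) ℤ :=
  ∑ T ∈ Finset.univ.filter (fun T => G.IsSpanningTree T), ∏ e ∈ T, MvPolynomial.X e

/-- The Kirchhoff graph polynomial `Ψ_G = Σ_{spanning trees T} Π_{e ∉ T} α_e`. -/
def graphPoly (G : FinEdgeGraph N) : MvPolynomial (Fin N) ℤ :=
  ∑ T ∈ Finset.univ.filter (fun T => G.IsSpanningTree T), ∏ e ∈ Tᶜ, MvPolynomial.X e

/-- The boundary map `∂ : ℤ^E → ℤ^V`, `e ↦ (target e) - (source e)`. -/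
def bdry (G : FinEdgeGraph N) (x : Fin N → ℤ) : G.V → ℤ := fun v =>
  ∑ e, x e * ((if G.t e = v then 1 else 0) - (if G.s e = v then 1 else 0))

/-- `c ∈ ℤ^E` is (the pre-image of) an oriented cycle (topological loop):
its support is a cyclically ordered set of edges through distinct vertices,
with entry `+1` or `-1` according to whether the orientation of the edge
agrees with that of the cycle. -/
def IsCycleVector (G : FinEdgeGraph N) (c : Fin N → ℤ) : Prop :=
  ∃ (n : ℕ) (_ : 0 < n) (f : Fin n → Fin N) (g : Fin n → G.V),
    Function.Injective f ∧ Function.Injective g ∧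
    (∀ i : Fin n,
      (c (f i) = 1 ∧ G.s (f i) = g i ∧ G.t (f i) = g ⟨(i.val + 1) % n, Nat.mod_lt _ (Nat.lt_of_le_of_lt (Nat.zero_le _) i.isLt)⟩) ∨
      (c (f i) = -1 ∧ G.t (f i) = g i ∧ G.s (f i) = g ⟨(i.val + 1) % n, Nat.mod_lt _ (Nat.lt_of_le_of_lt (Nat.zero_le _) i.isLt)⟩)) ∧
    (∀ e : Fin N, e ∉ Set.range f → c e = 0)

/-- A basis of small cycles: (i) each `C i` is an oriented cycle, (ii) the `C i`
generate `H_1(G,ℤ) = ker ∂`, and (iii) if `C i + Σ_{j ≠ i} λ_j C j = μ c` with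
`c ∈ H_1(G,ℤ)` and `μ ≠ 0`, then `μ = ±1`. -/
def IsSmallCycleBasis (G : FinEdgeGraph N) (C : Fin G.loopNumber → Fin N → ℤ) : Prop :=
  (∀ i, G.IsCycleVector (C i)) ∧
  (∀ c : Fin N → ℤ, G.bdry c = 0 → c ∈ Submodule.span ℤ (Set.range C)) ∧
  (∀ (i : Fin G.loopNumber) (lam : Fin G.loopNumber → ℤ) (c : Fin N → ℤ) (μ : ℤ),
    G.bdry c = 0 → μ ≠ 0 →
    C i + ∑ j ∈ Finset.univ.erase i, lam j • C j = μ • c → μ = 1 ∨ μ = -1)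

/-- `G` has a cycle (closed walk through distinct edges and distinct vertices)
of length `n`. -/
def HasCycleOfLength (G : FinEdgeGraph N) (n : ℕ) : Prop :=
  ∃ (f : Fin n → Fin N) (g : Fin n → G.V),
    Function.Injective f ∧ Function.Injective g ∧
    ∀ i : Fin n, (G.s (f i) = g i ∧ G.t (f i) = g ⟨(i.val + 1) % n, Nat.mod_lt _ (Nat.lt_of_le_of_lt (Nat.zero_le _) i.isLt)⟩) ∨
      (G.t (f i) = g i ∧ G.s (f i) = g ⟨(i.val + 1) % n, Nat.mod_lt _ (Nat.lt_of_le_of_lt (Nat.zero_le _) i.isLt)⟩)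

/-- The matrix `L_G = [[Δ(α), F^t], [-F, 0]]`, where `F` is the cycle-edge
incidence matrix of a basis of small cycles `C`. -/
def LG (G : FinEdgeGraph N) (C : Fin G.loopNumber → Fin N → ℤ) :
    Matrix (Fin (N + G.loopNumber)) (Fin (N + G.loopNumber)) (MvPolynomial (Fin N) ℤ) :=
  Matrix.reindex finSumFinEquiv finSumFinEquiv
    (Matrix.fromBlocks
      (Matrix.diagonal fun e => MvPolynomial.X e)
      (Matrix.of fun e i => ((C i e : ℤ) : MvPolynomial (Fin N) ℤ))
      (Matrix.of fun i e => ((-(C i e) : ℤ) : MvPolynomial (Fin N) ℤ))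
      (0 : Matrix (Fin G.loopNumber) (Fin G.loopNumber) (MvPolynomial (Fin N) ℤ)))

end FinEdgeGraph

/-- The determinant of the minor of `M` obtained by deleting the rows indexed by `I`
and the columns indexed by `J`, with rows and columns of the minor enumerated in
increasing order (and `0` if the sizes do not match). -/
def minorDet {R : Type} [CommRing R] {m : ℕ}
    (M : Matrix (Fin m) (Fin m) R) (I J : Finset (Fin m)) : R :=
  if h : (Iᶜ : Finset (Fin m)).card = (Jᶜ : Finset (Fin m)).card then
    Matrix.det (Matrix.of fun i j : Fin (Iᶜ : Finset (Fin m)).card =>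
      M (((Iᶜ : Finset (Fin m)).orderIsoOfFin rfl i).1)
        (((Jᶜ : Finset (Fin m)).orderIsoOfFin h.symm j).1))
  else 0

namespace FinEdgeGraph

/-- The dual Dodgson polynomial `φ^{I,J}_{G,K} = det L_G(I,J)|_{α_K = 0}`:
the determinant of `L_G` with the rows labelled by the edges of `I` and the
columns labelled by the edges of `J` deleted, and the variables of `K` set to zero. -/
def dualDodgson {N : ℕ} (G : FinEdgeGraph N) (C : Fin G.loopNumber → Fin N → ℤ)
    (I J K : Finset (Fin N)) : MvPolynomial (Fin N) ℤ :=
  MvPolynomial.aeval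
    (fun e => if e ∈ K then (0 : MvPolynomial (Fin N) ℤ) else MvPolynomial.X e)
    (minorDet (G.LG C) (I.image (Fin.castAdd G.loopNumber)) (J.image (Fin.castAdd G.loopNumber)))

/-- Edges `e1 e2 e3` form a triangle on distinct vertices `u v w`, with the
edges oriented consistently along the triangle. -/
def HasOrientedTriangle (G : FinEdgeGraph N) (e1 e2 e3 : Fin N) : Prop :=
  ∃ u v w : G.V, u ≠ v ∧ v ≠ w ∧ u ≠ w ∧
    G.s e1 = u ∧ G.t e1 = v ∧ G.s e2 = v ∧ G.t e2 = w ∧ G.s e3 = w ∧ G.t e3 = u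

/-- Edges `e1 e2 e3 e4` bound a 4-face (a 4-cycle on distinct vertices), with
`e1, e2` adjacent and `e1, e3` opposite, oriented consistently along the face. -/
def HasOrientedQuadFace (G : FinEdgeGraph N) (e1 e2 e3 e4 : Fin N) : Prop :=
  ∃ p q r s : G.V, p ≠ q ∧ p ≠ r ∧ p ≠ s ∧ q ≠ r ∧ q ≠ s ∧ r ≠ s ∧
    G.s e1 = p ∧ G.t e1 = q ∧ G.s e2 = q ∧ G.t e2 = r ∧
    G.s e3 = r ∧ G.t e3 = s ∧ G.s e4 = s ∧ G.t e4 = p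

end FinEdgeGraph

/-- `[f_1,…,f_k]_q`: the number of `F_q`-rational common zeros in `F^n` of a finite
set of integer polynomials (coefficients reduced to the finite field `F`). -/
def countZeros (F : Type) [Field F] [Fintype F] {n : ℕ}
    (S : Finset (MvPolynomial (Fin n) ℤ)) : ℕ :=
  Nat.card {x : Fin n → F // ∀ p ∈ S, MvPolynomial.aeval x p = 0}

end
lemma mod_succ_eq (n m : ℕ) (h : m < n) : (m+1) % n = if m+1 = n then 0 else m+1 := by
  split
  · simp_all
  · exact Nat.mod_eq_of_lt (by omega)

lemma rot_bij (n : ℕ) (hn : 0 < n) :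
    Function.Bijective (fun i : Fin n =>
      (⟨(i.val + 1) % n, Nat.mod_lt _ (Nat.lt_of_le_of_lt (Nat.zero_le _) i.isLt)⟩ : Fin n)) := by
  rw [Fintype.bijective_iff_injective_and_card]
  refine ⟨fun i j hij => ?_, rfl⟩
  have := congrArg Fin.val hij
  simp only at this
  rw [mod_succ_eq n _ i.isLt, mod_succ_eq n _ j.isLt] at this
  have hi := i.isLt; have hj := j.isLt
  ext
  split at this <;> split at this <;> omega

section Aux

open Finset

namespace FinEdgeGraph

variable {N : ℕ}

lemma bdry_add (G : FinEdgeGraph N) (x y : Fin N → ℤ) : G.bdry (x + y) = G.bdry x + G.bdry y := by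
  funext v
  simp [bdry, add_mul, Finset.sum_add_distrib]

lemma bdry_single (G : FinEdgeGraph N) (e0 : Fin N) (a : ℤ) :
    G.bdry (fun e => if e = e0 then a else 0) = fun v =>
      a * ((if G.t e0 = v then 1 else 0) - (if G.s e0 = v then 1 else 0)) := by
  funext v
  simp [bdry, Finset.sum_ite_eq']

/-- A cycle vector lies in the kernel of the boundary map. -/
lemma bdry_cycleVector (G : FinEdgeGraph N) {c : Fin N → ℤ} (h : G.IsCycleVector c) :
    G.bdry c = 0 := by
  obtain ⟨n, hn, f, g, hf, hg, hor, hsupp⟩ := h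
  funext v
  show (∑ e, c e * _) = 0
  rw [← Finset.sum_subset (Finset.subset_univ (Finset.image f Finset.univ))
    (by
      intro e _ he
      have : c e = 0 := hsupp e (by simpa using he)
      simp [this])]
  rw [Finset.sum_image (fun a _ b _ hab => hf hab)]
  have key : ∀ i : Fin n, c (f i) *
      ((if G.t (f i) = v then (1:ℤ) else 0) - (if G.s (f i) = v then 1 else 0)) =
      (if g ⟨(i.val + 1) % n, Nat.mod_lt _ (Nat.lt_of_le_of_lt (Nat.zero_le _) i.isLt)⟩ = v then (1:ℤ) else 0)
        - (if g i = v then 1 else 0) := by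
    intro i
    rcases hor i with ⟨h1, h2, h3⟩ | ⟨h1, h2, h3⟩ <;> rw [h1, h2, h3] <;> ring
  rw [Finset.sum_congr rfl (fun i _ => key i), Finset.sum_sub_distrib]
  have := Function.Bijective.sum_comp (rot_bij n hn) (fun x => if g x = v then (1:ℤ) else 0)
  rw [this]
  ring

end FinEdgeGraph

end Aux
namespace FinEdgeGraph

variable {N : ℕ}

/-- Path vectors: a connectivity chain within `S` yields an integer edge vector
supported on `S` whose boundary is `δ_v - δ_u`. -/
lemma exists_path_vector (G : FinEdgeGraph N) (S : Finset (Fin N)) {u v : G.V}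
    (h : Relation.ReflTransGen (G.Adj S) u v) :
    ∃ p : Fin N → ℤ, (∀ e, e ∉ S → p e = 0) ∧
      G.bdry p = fun w =>
        (if v = w then 1 else 0) - (if u = w then 1 else 0) := by
  induction h with
  | refl => exact ⟨0, fun e _ => rfl, by funext w; simp [bdry]⟩
  | @tail b c hub hadj ih =>
    obtain ⟨p, hp0, hpb⟩ := ih
    obtain ⟨e0, he0S, hor⟩ := hadj
    rcases hor with ⟨hs, ht⟩ | ⟨hs, ht⟩
    · refine ⟨p + fun e => if e = e0 then 1 else 0, ?_, ?_⟩
      · intro e he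
        have hne : e ≠ e0 := fun h' => he (h' ▸ he0S)
        simp [hp0 e he, hne]
      · rw [bdry_add, hpb, bdry_single, hs, ht]
        funext w; simp; try ring
    · refine ⟨p + fun e => if e = e0 then -1 else 0, ?_, ?_⟩
      · intro e he
        have hne : e ≠ e0 := fun h' => he (h' ▸ he0S)
        simp [hp0 e he, hne]
      · rw [bdry_add, hpb, bdry_single, hs, ht]
        funext w; simp; try ring

/-- A vector in the kernel of the boundary map is orthogonal to any cut. -/
lemma cycle_cut_orthogonal (G : FinEdgeGraph N) (A : Finset G.V) {c : Fin N → ℤ}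
    (hc : G.bdry c = 0) :
    ∑ e, c e * ((if G.t e ∈ A then 1 else 0) - (if G.s e ∈ A then 1 else 0)) = 0 := by
  have key : ∀ e : Fin N,
      c e * ((if G.t e ∈ A then (1:ℤ) else 0) - (if G.s e ∈ A then 1 else 0))
      = ∑ w ∈ A, c e * ((if G.t e = w then 1 else 0) - (if G.s e = w then 1 else 0)) := by
    intro e
    rw [← Finset.mul_sum, Finset.sum_sub_distrib]
    congr 2 <;> rw [Finset.sum_ite_eq A] <;> try simp
  rw [Finset.sum_congr rfl (fun e _ => key e), Finset.sum_comm]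
  have : ∀ w, (∑ e, c e * ((if G.t e = w then (1:ℤ) else 0) - (if G.s e = w then 1 else 0))) = 0 := by
    intro w; exact congrFun hc w
  simp [this]

end FinEdgeGraph
namespace FinEdgeGraph

variable {N : ℕ}

lemma adj_symm (G : FinEdgeGraph N) (S : Finset (Fin N)) {u v : G.V} (h : G.Adj S u v) :
    G.Adj S v u := by
  obtain ⟨e, he, h1 | h2⟩ := h
  exacts [⟨e, he, Or.inr h1⟩, ⟨e, he, Or.inl h2⟩]

/-- If two distinct vertices are connected within `S`, some edge of `S` is not a loop. -/
lemma exists_nonloop (G : FinEdgeGraph N) (S : Finset (Fin N)) {u v : G.V}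
    (h : Relation.ReflTransGen (G.Adj S) u v) (hne : u ≠ v) :
    ∃ e ∈ S, G.s e ≠ G.t e := by
  induction h using Relation.ReflTransGen.head_induction_on with
  | refl => exact absurd rfl hne
  | @head a b hab hbv ih =>
    by_cases hst : a = b
    · subst hst; exact ih hne
    · obtain ⟨e, heS, h1 | h2⟩ := hab
      · exact ⟨e, heS, fun hh => hst (h1.1.symm.trans (hh.trans h1.2))⟩
      · exact ⟨e, heS, fun hh => hst ((h2.2.symm.trans (hh.symm.trans h2.1)))⟩

/-- A connected edge set on `V` has at least `|V| - 1` edges. -/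
lemma card_le_of_connectedOn :
    ∀ (k : ℕ) {N : ℕ} (G : FinEdgeGraph N) (S : Finset (Fin N)), S.card = k →
      G.ConnectedOn S → Fintype.card G.V ≤ k + 1 := by
  intro k
  induction k with
  | zero =>
    intro N G S hS hconn
    have hsub : ∀ u v : G.V, u = v := by
      intro u v
      induction hconn u v with
      | refl => rfl
      | tail _ hadj ih =>
        obtain ⟨e, he, _⟩ := hadj
        rw [Finset.card_eq_zero.mp hS] at he
        exact absurd he (Finset.notMem_empty e)
    exact Fintype.card_le_one_iff.mpr hsub
  | succ k ih =>
    intro N G S hS hconn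
    by_cases hcard : Fintype.card G.V ≤ 1
    · omega
    · obtain ⟨u, v, huv⟩ := Fintype.exists_pair_of_one_lt_card (α := G.V) (by omega)
      obtain ⟨e, heS, hloop⟩ := G.exists_nonloop S (hconn u v) huv
      set a := G.s e with ha
      set b := G.t e with hb
      have hba : b ≠ a := fun h => hloop h.symm
      -- contract the edge `e`: identify `a` with `b`
      let π : G.V → {x : G.V // x ≠ a} := fun x =>
        if h : x = a then ⟨b, hba⟩ else ⟨x, h⟩
      let G' : FinEdgeGraph N := ⟨{x : G.V // x ≠ a}, fun f => π (G.s f), fun f => π (G.t f)⟩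
      have hπstep : ∀ x y : G.V, G.Adj S x y →
          Relation.ReflTransGen (G'.Adj (S.erase e)) (π x) (π y) := by
        intro x y hxy
        by_cases hpi : π x = π y
        · rw [hpi]
        · obtain ⟨f, hfS, hor⟩ := hxy
          have hfe : f ≠ e := by
            rintro rfl
            apply hpi
            rcases hor with ⟨h1, h2⟩ | ⟨h1, h2⟩
            · rw [← h1, ← h2]
              show π a = π b
              simp [π, hba]
            · rw [← h1, ← h2]
              show π b = π a
              simp [π, hba]
          refine Relation.ReflTransGen.single ⟨f, Finset.mem_erase.mpr ⟨hfe, hfS⟩, ?_⟩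
          rcases hor with ⟨h1, h2⟩ | ⟨h1, h2⟩
          · exact Or.inl ⟨by show π (G.s f) = π x; rw [h1], by show π (G.t f) = π y; rw [h2]⟩
          · exact Or.inr ⟨by show π (G.s f) = π y; rw [h1], by show π (G.t f) = π x; rw [h2]⟩
      have hconn' : G'.ConnectedOn (S.erase e) := by
        intro u' v'
        have : Relation.ReflTransGen (G.Adj S) u'.1 v'.1 := hconn _ _
        have hmap : ∀ x y : G.V, Relation.ReflTransGen (G.Adj S) x y →
            Relation.ReflTransGen (G'.Adj (S.erase e)) (π x) (π y) := by
          intro x y hxy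
          induction hxy with
          | refl => exact Relation.ReflTransGen.refl
          | tail _ hadj ih2 => exact ih2.trans (hπstep _ _ hadj)
        have := hmap _ _ this
        have hu : π u'.1 = u' := by simp [π, u'.2]
        have hv : π v'.1 = v' := by simp [π, v'.2]
        rwa [hu, hv] at this
      have hcard' : Fintype.card G'.V = Fintype.card G.V - 1 := by
        show Fintype.card {x : G.V // x ≠ a} = _
        simp [Fintype.card_subtype_compl]
      have herase : (S.erase e).card = k := by
        rw [Finset.card_erase_of_mem heS, hS]
        omega
      have := ih G' (S.erase e) herase hconn'
      omega

end FinEdgeGraph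
namespace FinEdgeGraph

variable {N : ℕ}

/-- If there is a walk from inside `A` to outside `A`, some edge crosses `A`. -/
lemma exists_crossing_edge (G : FinEdgeGraph N) (A : Finset G.V) {x y : G.V}
    (h : Relation.ReflTransGen (G.Adj Finset.univ) x y) (hx : x ∈ A) (hy : y ∉ A) :
    ∃ e : Fin N, (G.s e ∈ A ∧ G.t e ∉ A) ∨ (G.t e ∈ A ∧ G.s e ∉ A) := by
  revert hx
  induction h using Relation.ReflTransGen.head_induction_on with
  | refl => exact fun hx => absurd hx hy
  | @head a c hac hcy ih =>
    intro ha
    by_cases hcA : c ∈ A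
    · exact ih hcA
    · obtain ⟨e, _, ⟨h1, h2⟩ | ⟨h1, h2⟩⟩ := hac
      · exact ⟨e, Or.inl ⟨h1.symm ▸ ha, h2.symm ▸ hcA⟩⟩
      · exact ⟨e, Or.inr ⟨h2.symm ▸ ha, h1.symm ▸ hcA⟩⟩

end FinEdgeGraph
/-- For a connected graph `G`, a basis of small cycles `C` with
cycle-edge incidence matrix `F_C = C`, and a set `T` of `N_G - h_G` edges, the
determinant of `F_C(T)` (columns labelled by `T` deleted) is `±1` if `T` is a
spanning tree and `0` otherwise. -/
theorem statement0 (N : ℕ) (G : FinEdgeGraph N) [Nonempty G.V] (hconn : G.IsConnected)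
    (C : Fin G.loopNumber → Fin N → ℤ) (hC : G.IsSmallCycleBasis C)
    (T : Finset (Fin N)) (hT : T.card = N - G.loopNumber) :
    ∀ hc : (Tᶜ : Finset (Fin N)).card = G.loopNumber,
      (G.IsSpanningTree T →
        Matrix.det (Matrix.of fun i j : Fin G.loopNumber =>
            C i (((Tᶜ : Finset (Fin N)).orderIsoOfFin hc j).1)) = 1 ∨
        Matrix.det (Matrix.of fun i j : Fin G.loopNumber =>
            C i (((Tᶜ : Finset (Fin N)).orderIsoOfFin hc j).1)) = -1) ∧
      (¬ G.IsSpanningTree T →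
        Matrix.det (Matrix.of fun i j : Fin G.loopNumber =>
            C i (((Tᶜ : Finset (Fin N)).orderIsoOfFin hc j).1)) = 0) := by
  intro hc
  set F : Matrix (Fin G.loopNumber) (Fin G.loopNumber) ℤ :=
    Matrix.of fun i j : Fin G.loopNumber =>
      C i (((Tᶜ : Finset (Fin N)).orderIsoOfFin hc j).1) with hFdef
  have hmemc : ∀ k : Fin G.loopNumber, (((Tᶜ).orderIsoOfFin hc k).1 : Fin N) ∉ T := by
    intro k
    have h2 := ((Tᶜ).orderIsoOfFin hc k).2
    rw [Finset.mem_compl] at h2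
    exact h2
  constructor
  · -- spanning tree case
    intro hspan
    have hfund : ∀ j : Fin G.loopNumber, ∃ cc : Fin N → ℤ,
        G.bdry cc = 0 ∧ cc (((Tᶜ).orderIsoOfFin hc j).1) = 1 ∧
        ∀ e, e ∉ T → e ≠ ((Tᶜ).orderIsoOfFin hc j).1 → cc e = 0 := by
      intro j
      set ej := (((Tᶜ).orderIsoOfFin hc j).1 : Fin N) with hej
      have hejT : ej ∉ T := hmemc j
      obtain ⟨p, hp0, hpb⟩ := G.exists_path_vector T (hspan.1 (G.t ej) (G.s ej))
      refine ⟨(fun e => if e = ej then 1 else 0) + p, ?_, ?_, ?_⟩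
      · rw [FinEdgeGraph.bdry_add, hpb, FinEdgeGraph.bdry_single]
        funext w
        simp only [Pi.add_apply, Pi.zero_apply]
        ring
      · simp [hp0 ej hejT]
      · intro e heT hne
        simp [hne, hp0 e heT]
    choose cc hcc0 hcc1 hcc2 using hfund
    have hlam : ∀ j, ∃ lam : Fin G.loopNumber → ℤ, ∑ i, lam i • C i = cc j := by
      intro j
      exact (Submodule.mem_span_range_iff_exists_fun ℤ).mp (hC.2.1 _ (hcc0 j))
    choose lam hlam using hlam
    set Λ : Matrix (Fin G.loopNumber) (Fin G.loopNumber) ℤ :=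
      Matrix.of fun j i => lam j i with hΛdef
    have hmul : Λ * F = 1 := by
      ext j k
      rw [Matrix.mul_apply]
      have h1 : ∑ i, Λ j i * F i k
          = (∑ i, lam j i • C i) (((Tᶜ).orderIsoOfFin hc k).1) := by
        rw [Finset.sum_apply]
        rfl
      rw [h1, hlam j]
      by_cases hjk : j = k
      · subst hjk
        rw [hcc1 j, Matrix.one_apply_eq]
      · have hne : (((Tᶜ).orderIsoOfFin hc k).1 : Fin N) ≠ ((Tᶜ).orderIsoOfFin hc j).1 := by
          intro hh
          exact hjk (((Tᶜ).orderIsoOfFin hc).injective (Subtype.ext hh)).symm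
        rw [hcc2 j _ (hmemc k) hne, Matrix.one_apply_ne hjk]
    have hunit : IsUnit F.det := by
      apply IsUnit.of_mul_eq_one Λ.det
      rw [mul_comm, ← Matrix.det_mul, hmul, Matrix.det_one]
    exact Int.isUnit_iff.mp hunit
  · -- non spanning tree case
    intro hnspan
    have hVle : Fintype.card G.V ≤ N + 1 := by
      have := FinEdgeGraph.card_le_of_connectedOn N G Finset.univ (by simp) hconn
      simpa using this
    have hV1 : 1 ≤ Fintype.card G.V := Fintype.card_pos
    have hTle : T.card ≤ N := by
      have := Finset.card_le_card (Finset.subset_univ T)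
      simpa using this
    have hloopN : G.loopNumber = N + 1 - Fintype.card G.V := rfl
    have hTcard : T.card + 1 = Fintype.card G.V := by omega
    have hnconn : ¬ G.ConnectedOn T := fun hcon => hnspan ⟨hcon, hTcard⟩
    rw [FinEdgeGraph.ConnectedOn] at hnconn
    push_neg at hnconn
    obtain ⟨u, v, hnr⟩ := hnconn
    set A : Finset G.V :=
      Finset.univ.filter (fun x => Relation.ReflTransGen (G.Adj T) u x) with hAdef
    have huA : u ∈ A := Finset.mem_filter.mpr ⟨Finset.mem_univ u, Relation.ReflTransGen.refl⟩
    have hvA : v ∉ A := by simp [hAdef, hnr]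
    have hcut : ∀ e ∈ T, (G.s e ∈ A ↔ G.t e ∈ A) := by
      intro e he
      have h1 : G.Adj T (G.s e) (G.t e) := ⟨e, he, Or.inl ⟨rfl, rfl⟩⟩
      simp only [hAdef, Finset.mem_filter, Finset.mem_univ, true_and]
      exact ⟨fun hm => hm.tail h1, fun hm => hm.tail (G.adj_symm T h1)⟩
    obtain ⟨e0, hcross⟩ := G.exists_crossing_edge A (hconn u v) huA hvA
    have he0T : e0 ∉ T := by
      intro hmem
      rcases hcross with ⟨h1, h2⟩ | ⟨h1, h2⟩
      · exact h2 ((hcut e0 hmem).mp h1)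
      · exact h2 ((hcut e0 hmem).mpr h1)
    set d : Fin N → ℤ :=
      fun e => (if G.t e ∈ A then 1 else 0) - (if G.s e ∈ A then 1 else 0) with hddef
    have hdT : ∀ e ∈ T, d e = 0 := by
      intro e he
      by_cases hs : G.s e ∈ A
      · simp [hddef, hs, (hcut e he).mp hs]
      · have ht : G.t e ∉ A := fun ht => hs ((hcut e he).mpr ht)
        simp [hddef, hs, ht]
    set vv : Fin G.loopNumber → ℤ := fun k => d (((Tᶜ).orderIsoOfFin hc k).1) with hvvdef
    have hker : F.mulVec vv = 0 := by
      funext i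
      show ∑ k, F i k * vv k = 0
      have h1 : ∑ k, F i k * vv k
          = ∑ x : (Tᶜ : Finset (Fin N)), C i x.1 * d x.1 := by
        refine Fintype.sum_equiv ((Tᶜ).orderIsoOfFin hc).toEquiv _ _ (fun k => rfl)
      rw [h1, Finset.sum_coe_sort (Tᶜ) (fun x => C i x * d x)]
      rw [Finset.sum_subset (Finset.subset_univ (Tᶜ))
        (by
          intro e _ he
          have heT : e ∈ T := by simpa [Finset.mem_compl] using he
          rw [hdT e heT, mul_zero])]
      exact G.cycle_cut_orthogonal A (G.bdry_cycleVector (hC.1 i))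
    have hdet0 : F.det • vv = 0 := by
      calc F.det • vv = (F.det • (1 : Matrix (Fin G.loopNumber) (Fin G.loopNumber) ℤ)).mulVec vv := by
            rw [Matrix.smul_mulVec, Matrix.one_mulVec]
        _ = (F.adjugate * F).mulVec vv := by rw [Matrix.adjugate_mul]
        _ = F.adjugate.mulVec (F.mulVec vv) := (Matrix.mulVec_mulVec vv F.adjugate F).symm
        _ = 0 := by rw [hker, Matrix.mulVec_zero]
    have he0c : e0 ∈ (Tᶜ : Finset (Fin N)) := Finset.mem_compl.mpr he0T
    set k0 := ((Tᶜ).orderIsoOfFin hc).symm ⟨e0, he0c⟩ with hk0def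
    have hk0 : ((((Tᶜ).orderIsoOfFin hc) k0).1 : Fin N) = e0 := by
      rw [hk0def, OrderIso.apply_symm_apply]
    have hvvk0 : vv k0 ≠ 0 := by
      rw [hvvdef]
      simp only [hk0]
      rcases hcross with ⟨h1, h2⟩ | ⟨h1, h2⟩ <;> simp [hddef, h1, h2]
    have hfin := congrFun hdet0 k0
    simp only [Pi.smul_apply, smul_eq_mul, Pi.zero_apply] at hfin
    rcases mul_eq_zero.mp hfin with h | h
    · exact h
    · exact absurd h hvvk0
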